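/- Let P_n be defined by P_3 = 1 and P_{n+1} = (1+t)·P_n + (t/2)·∑_{j=2}^{n-2} C(n,j)·P_{j+1}·P_{n-j+1}. Then for every n ≥ 3, the sum ∑_{j=2}^{n-2} C(n,j)·P_{j+1}·P_{n-j+1} has all even integer coefficients, so P_{n+1} has integer coefficients. -/

import Mathlib

open Polynomial Finset

lemma mem_lifts_iff_int (p : Polynomial ℚ) :
    p ∈ lifts (Int.castRingHom ℚ) ↔ ∀ k, ∃ z : ℤ, p.coeff k = z := by
  rw [Polynomial.lifts_iff_coeff_lifts]
  simp only [Set.mem_range, Int.coe_castRingHom]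
  exact forall_congr' fun k => ⟨fun ⟨z, h⟩ => ⟨z, h.symm⟩, fun ⟨z, h⟩ => ⟨z, h.symm⟩⟩

lemma two_dvd_central (j : ℕ) (hj : 1 ≤ j) : 2 ∣ (2 * j).choose j := by
  obtain ⟨i, rfl⟩ : ∃ i, j = i + 1 := ⟨j - 1, by omega⟩
  have h1 : 2 * (i + 1) = (2 * i + 1) + 1 := by ring
  rw [h1, Nat.choose_succ_succ']
  have h2 : (2 * i + 1).choose i = (2 * i + 1).choose (i + 1) := by
    have := Nat.choose_symm (show i + 1 ≤ 2 * i + 1 by omega)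
    simpa [show 2 * i + 1 - (i + 1) = i by omega] using this
  omega

lemma even_symm_sum (n : ℕ) (a : ℕ → ℤ)
    (hsym : ∀ j ∈ Icc 2 (n - 2), a (n - j) = a j) :
    (2 : ℤ) ∣ ∑ j ∈ Icc 2 (n - 2), (n.choose j : ℤ) * a j := by
  have : ((∑ j ∈ Icc 2 (n - 2), (n.choose j : ℤ) * a j : ℤ) : ZMod 2) = 0 := by
    push_cast
    apply Finset.sum_involution (fun j _ => n - j)
    · intro j hj
      simp only [mem_Icc] at hj
      have hle : j ≤ n := by omega
      have h1 : n.choose (n - j) = n.choose j := Nat.choose_symm hle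
      have h2 : a (n - j) = a j := hsym j (by simp [mem_Icc]; omega)
      rw [h1, h2]
      exact CharTwo.add_self_eq_zero _
    · intro j hj hne
      simp only [mem_Icc] at hj
      intro heq
      apply hne
      have hn2 : n = 2 * j := by omega
      have hz : ((n.choose j : ℕ) : ZMod 2) = 0 := by
        exact (ZMod.natCast_eq_zero_iff _ 2).mpr (hn2 ▸ two_dvd_central j (by omega))
      rw [hz, zero_mul]
    · intro j hj
      simp only [mem_Icc] at hj ⊢
      omega
    · intro j hj
      simp only [mem_Icc] at hj
      omega
  rwa [ZMod.intCast_zmod_eq_zero_iff_dvd] at this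

lemma sum_even_coeffs (P : ℕ → Polynomial ℚ) (n : ℕ) (hn : 3 ≤ n)
    (hmem : ∀ m, 3 ≤ m → m ≤ n → P m ∈ lifts (Int.castRingHom ℚ)) :
    ∀ k, ∃ m : ℤ, (∑ j ∈ Icc 2 (n - 2),
        (n.choose j : Polynomial ℚ) * P (j + 1) * P (n - j + 1)).coeff k = 2 * m := by
  intro k
  set a : ℕ → ℤ := fun j => ((P (j + 1) * P (n - j + 1)).coeff k).num with ha_def
  have ha : ∀ j ∈ Icc 2 (n - 2), ((a j : ℚ)) = (P (j + 1) * P (n - j + 1)).coeff k := by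
    intro j hj
    simp only [mem_Icc] at hj
    have h1 : P (j + 1) ∈ lifts (Int.castRingHom ℚ) := hmem _ (by omega) (by omega)
    have h2 : P (n - j + 1) ∈ lifts (Int.castRingHom ℚ) := hmem _ (by omega) (by omega)
    have hprod : P (j + 1) * P (n - j + 1) ∈ lifts (Int.castRingHom ℚ) := mul_mem h1 h2
    obtain ⟨z, hz⟩ := (mem_lifts_iff_int _).mp hprod k
    rw [ha_def]
    simp only [hz, Rat.num_intCast]
  have hsym : ∀ j ∈ Icc 2 (n - 2), a (n - j) = a j := by
    intro j hj
    simp only [mem_Icc] at hj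
    have h1 : n - (n - j) = j := by omega
    simp only [ha_def, h1, mul_comm]
  obtain ⟨m, hm⟩ := even_symm_sum n a hsym
  refine ⟨m, ?_⟩
  rw [finset_sum_coeff]
  have : ∀ j ∈ Icc 2 (n - 2),
      ((n.choose j : Polynomial ℚ) * P (j + 1) * P (n - j + 1)).coeff k
        = ((n.choose j : ℤ) * a j : ℤ) := by
    intro j hj
    rw [mul_assoc, (C_eq_natCast (n.choose j)).symm,
      coeff_C_mul, ← ha j hj]
    push_cast
    ring
  rw [Finset.sum_congr rfl this, ← Int.cast_sum, hm]
  push_cast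
  ring

theorem keel_integer_coeffs (P : ℕ → Polynomial ℚ) (h3 : P 3 = 1)
    (hrec : ∀ n, 3 ≤ n → P (n + 1) = (1 + X) * P n +
      C (1/2 : ℚ) * X * ∑ j ∈ Icc 2 (n - 2),
        (n.choose j : Polynomial ℚ) * P (j + 1) * P (n - j + 1)) :
    ∀ n, 3 ≤ n →
      (∀ k, ∃ m : ℤ, (∑ j ∈ Icc 2 (n - 2),
        (n.choose j : Polynomial ℚ) * P (j + 1) * P (n - j + 1)).coeff k = 2 * m) ∧
      (∀ k, ∃ m : ℤ, (P (n + 1)).coeff k = m) := by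
  have hP : ∀ n, 3 ≤ n → P n ∈ lifts (Int.castRingHom ℚ) := by
    intro n
    induction n using Nat.strong_induction_on with
    | _ n ih =>
      intro hn
      rcases eq_or_lt_of_le hn with heq | hlt
      · rw [← heq, h3]; exact one_mem _
      · obtain ⟨m, rfl⟩ : ∃ m, n = m + 1 := ⟨n - 1, by omega⟩
        have hm : 3 ≤ m := by omega
        rw [hrec m hm]
        have hmem : ∀ l, 3 ≤ l → l ≤ m → P l ∈ lifts (Int.castRingHom ℚ) :=
          fun l h3l hlm => ih l (by omega) h3l
        have hfirst : (1 + X) * P m ∈ lifts (Int.castRingHom ℚ) :=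
          mul_mem (add_mem (one_mem _) (X_mem_lifts _)) (hmem m hm le_rfl)
        have heven := sum_even_coeffs P m hm hmem
        set S := ∑ j ∈ Icc 2 (m - 2),
          (m.choose j : Polynomial ℚ) * P (j + 1) * P (m - j + 1) with hS
        have hhalf : C (1/2 : ℚ) * S ∈ lifts (Int.castRingHom ℚ) := by
          rw [mem_lifts_iff_int]
          intro k
          obtain ⟨z, hz⟩ := heven k
          exact ⟨z, by rw [coeff_C_mul, hz]; ring⟩
        have : C (1/2 : ℚ) * X * S = X * (C (1/2 : ℚ) * S) := by ring
        rw [this]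
        exact add_mem hfirst (mul_mem (X_mem_lifts _) hhalf)
  intro n hn
  constructor
  · exact sum_even_coeffs P n hn (fun m h3m _ => hP m h3m)
  · exact (mem_lifts_iff_int _).mp (hP (n + 1) (by omega))
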